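/- If k₁ + k₂ + k₃ = 0, then the cubic-vertex cochain is represented by the YM bracket: B([ξ₁,ξ₂]_YM, ξ₃) = v₃((ξ₁,k₁),(ξ₂,k₂),(ξ₃,k₃)), where [ξ₁,ξ₂]_YM := 2(ξ₁·k₂)ξ₂ − 2(ξ₂·k₁)ξ₁ + (ξ₁·ξ₂)(k₁−k₂) + (ξ₁·k₁)ξ₂ − (ξ₂·k₂)ξ₁. -/

import Mathlib

namespace Stmt2

variable {V : Type*} [AddCommGroup V] [Module ℝ V]

/-- The cubic-vertex cochain `v₃` on three modes. -/
def v₃ (B : LinearMap.BilinForm ℝ V) (p q r : V × V) : ℝ :=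
  B q.1 r.2 * B p.1 r.1 - B p.1 r.2 * B q.1 r.1
    + B r.1 p.2 * B q.1 p.1 - B q.1 p.2 * B r.1 p.1
    + B p.1 q.2 * B r.1 q.1 - B r.1 q.2 * B p.1 q.1

/-- The YM bracket of modes: polarization
`[ξ₁,ξ₂]_YM = 2(ξ₁·k₂)ξ₂ − 2(ξ₂·k₁)ξ₁ + (ξ₁·ξ₂)(k₁−k₂) + (ξ₁·k₁)ξ₂ − (ξ₂·k₂)ξ₁`,
momentum `k₁+k₂`. -/
def ymMode (B : LinearMap.BilinForm ℝ V) (p q : V × V) : V × V :=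
  ((2 * B p.1 q.2) • q.1 - (2 * B q.1 p.2) • p.1 + B p.1 q.1 • (p.2 - q.2)
    + B p.1 p.2 • q.1 - B q.1 q.2 • p.1, p.2 + q.2)

/-- If `k₁ + k₂ + k₃ = 0`, the cubic-vertex cochain is represented by the YM
bracket: `B([ξ₁,ξ₂]_YM, ξ₃) = v₃`. -/
theorem ym_represents_v₃ (B : LinearMap.BilinForm ℝ V) (hB : B.IsSymm)
    (ξ₁ k₁ ξ₂ k₂ ξ₃ k₃ : V) (h : k₁ + k₂ + k₃ = 0) :
    B (ymMode B (ξ₁, k₁) (ξ₂, k₂)).1 ξ₃ = v₃ B (ξ₁, k₁) (ξ₂, k₂) (ξ₃, k₃) := by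
  have hk : k₃ = -k₁ - k₂ := by linear_combination (norm := abel) h
  subst hk
  simp only [ymMode, v₃, map_add, map_sub, map_smul, map_neg, LinearMap.add_apply,
    LinearMap.sub_apply, LinearMap.smul_apply, LinearMap.neg_apply, smul_eq_mul]
  rw [show (B ξ₂) k₁ = (B k₁) ξ₂ from (hB.eq k₁ ξ₂).symm,
      show (B ξ₃) k₁ = (B k₁) ξ₃ from (hB.eq k₁ ξ₃).symm,
      show (B ξ₃) k₂ = (B k₂) ξ₃ from (hB.eq k₂ ξ₃).symm,
      show (B ξ₂) ξ₁ = (B ξ₁) ξ₂ from (hB.eq ξ₁ ξ₂).symm,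
      show (B ξ₃) ξ₁ = (B ξ₁) ξ₃ from (hB.eq ξ₁ ξ₃).symm,
      show (B ξ₃) ξ₂ = (B ξ₂) ξ₃ from (hB.eq ξ₂ ξ₃).symm]
  ring

end Stmt2
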